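/- arXiv:1103.2138 — 2 statements merged into one kernel-verified Lean document; each statement's English description precedes it below -/
import Mathlib

section
/- Let H and K be Hilbert spaces and let T₀ : H → K be a bounded surjective linear map. The restriction of T₀ to the orthogonal complement (ker T₀)ᗮ is a bounded bijection onto K; let Q : K → H denote its (bounded) inverse. If T : H → K is a bounded linear map with ‖Q‖ · ‖T − T₀‖ < 1/2, then the orthogonal projection of H onto ker T₀ restricts to a linear isomorphism from ker T onto ker T₀. -/
/-- **Proposition (projection between kernels, "subbundle of kernels").**
Let `H`, `K` be Hilbert spaces and `T₀ : H → K` a bounded surjective linear map.  The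
restriction of `T₀` to `(ker T₀)ᗮ` is a bounded bijection onto `K`; let `Q : K → H` be its
bounded inverse (characterized by `T₀ ∘ Q = id` and `range Q ⊆ (ker T₀)ᗮ`).  If `T : H → K`
is a bounded linear map with `‖Q‖ * ‖T - T₀‖ < 1/2`, then the orthogonal projection of `H`
onto `ker T₀` restricts to a linear isomorphism from `ker T` onto `ker T₀`.  (Here the
isomorphism `φ` being a restriction of the orthogonal projection is expressed by
`x - φ x ∈ (ker T₀)ᗮ` for all `x ∈ ker T`.) -/
theorem orthogonalProjection_ker_isomorphism
    {H K : Type*}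
    [NormedAddCommGroup H] [InnerProductSpace ℝ H] [CompleteSpace H]
    [NormedAddCommGroup K] [InnerProductSpace ℝ K] [CompleteSpace K]
    (T₀ : H →L[ℝ] K) (hsurj : Function.Surjective T₀)
    (Q : K →L[ℝ] H)
    (hQrange : ∀ y : K, Q y ∈ (LinearMap.ker (T₀ : H →ₗ[ℝ] K))ᗮ)
    (hT₀Q : T₀.comp Q = ContinuousLinearMap.id ℝ K)
    (T : H →L[ℝ] K)
    (h : ‖Q‖ * ‖T - T₀‖ < 1 / 2) :
    ∃ φ : LinearMap.ker (T : H →ₗ[ℝ] K) ≃ₗ[ℝ] LinearMap.ker (T₀ : H →ₗ[ℝ] K),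
      ∀ x : LinearMap.ker (T : H →ₗ[ℝ] K), (x : H) - (φ x : H) ∈ (LinearMap.ker (T₀ : H →ₗ[ℝ] K))ᗮ := by
  set N : Submodule ℝ H := LinearMap.ker (T₀ : H →ₗ[ℝ] K) with hN
  haveI : CompleteSpace N := (ContinuousLinearMap.isClosed_ker T₀).completeSpace_coe
  set S : K →L[ℝ] K := (T - T₀).comp Q with hS
  have hSnorm : ‖S‖ < 1 := by
    calc ‖S‖ ≤ ‖T - T₀‖ * ‖Q‖ := ContinuousLinearMap.opNorm_comp_le _ _
    _ = ‖Q‖ * ‖T - T₀‖ := mul_comm _ _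
    _ < 1 / 2 := h
    _ < 1 := by norm_num
  have hSnorm' : ‖-S‖ < 1 := by rwa [norm_neg]
  set u : (K →L[ℝ] K)ˣ := Units.oneSub (-S) hSnorm' with hu
  set R : K →L[ℝ] K := ↑u⁻¹ with hR
  have huval : (u : K →L[ℝ] K) = 1 + S := by
    simp [hu, Units.oneSub, sub_neg_eq_add]
  have hTQ : T.comp Q = 1 + S := by
    have h1 : S = T.comp Q - T₀.comp Q := by
      ext y; simp [hS, ContinuousLinearMap.sub_comp]
    rw [hT₀Q] at h1
    rw [h1]; ext y; simp
  have huR : ∀ y : K, (1 + S) (R y) = y := by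
    intro y
    have h1 := u.mul_inv
    rw [huval] at h1
    have h2 := congrArg (fun (A : K →L[ℝ] K) => A y) h1
    simpa using h2
  have hRu : ∀ y : K, R ((1 + S) y) = y := by
    intro y
    have h1 := u.inv_mul
    rw [huval] at h1
    have h2 := congrArg (fun (A : K →L[ℝ] K) => A y) h1
    simpa using h2
  have hTQR : ∀ y : K, T (Q (R y)) = y := by
    intro y
    have h1 : T (Q (R y)) = (T.comp Q) (R y) := rfl
    rw [h1, hTQ]
    exact huR y
  have hQT₀ : ∀ v ∈ Nᗮ, Q (T₀ v) = v := by
    intro v hv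
    have h1 : Q (T₀ v) - v ∈ N := by
      simp only [hN, LinearMap.mem_ker, ContinuousLinearMap.coe_coe, map_sub]
      have h2 : T₀ (Q (T₀ v)) = (T₀.comp Q) (T₀ v) := rfl
      rw [h2, hT₀Q]; simp
    have h2 : Q (T₀ v) - v ∈ Nᗮ := sub_mem (hQrange _) hv
    have h3 := Submodule.mem_inf.mpr ⟨h1, h2⟩
    rw [Submodule.inf_orthogonal_eq_bot N] at h3
    simpa [sub_eq_zero] using h3
  have hRT : ∀ w ∈ Nᗮ, R (T w) = T₀ w := by
    intro w hw
    have key : (1 + S) (T₀ w) = T w := by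
      simp only [ContinuousLinearMap.add_apply, ContinuousLinearMap.one_apply, hS,
        ContinuousLinearMap.comp_apply, ContinuousLinearMap.sub_apply]
      rw [hQT₀ w hw]; abel
    rw [← key, hRu]
  set P : H →L[ℝ] N := N.orthogonalProjectionOnto with hP
  set f : LinearMap.ker (T : H →ₗ[ℝ] K) →ₗ[ℝ] N :=
    (P : H →ₗ[ℝ] N).comp (LinearMap.ker (T : H →ₗ[ℝ] K)).subtype with hf
  set g₀ : H →L[ℝ] H := ContinuousLinearMap.id ℝ H - Q.comp (R.comp T) with hg₀
  have hg₀mem : ∀ z ∈ N, g₀ z ∈ LinearMap.ker (T : H →ₗ[ℝ] K) := by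
    intro z hz
    simp only [LinearMap.mem_ker, ContinuousLinearMap.coe_coe, hg₀, ContinuousLinearMap.sub_apply,
      ContinuousLinearMap.coe_id', id_eq, ContinuousLinearMap.comp_apply, map_sub]
    rw [hTQR]; simp
  set g : N →ₗ[ℝ] LinearMap.ker (T : H →ₗ[ℝ] K) :=
    LinearMap.codRestrict (LinearMap.ker (T : H →ₗ[ℝ] K))
      ((g₀ : H →ₗ[ℝ] H).comp N.subtype) (fun z => hg₀mem z z.2) with hg
  have hgf : ∀ x : LinearMap.ker (T : H →ₗ[ℝ] K), (g (f x) : H) = (x : H) := by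
    intro x
    have hx : (x : H) ∈ LinearMap.ker (T : H →ₗ[ℝ] K) := x.2
    set w : H := (x : H) - P (x : H) with hw
    have hwmem : w ∈ Nᗮ := N.sub_starProjection_mem_orthogonal (x : H)
    have hTP : T ((P (x : H)) : H) = -(T w) := by
      have h1 : T w = T (x : H) - T ((P (x : H)) : H) := by simp [hw]
      rw [show T (x : H) = 0 from LinearMap.mem_ker.mp hx] at h1
      rw [h1]; abel
    show g₀ ((P (x : H) : H)) = (x : H)
    simp only [hg₀, ContinuousLinearMap.sub_apply, ContinuousLinearMap.coe_id', id_eq,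
      ContinuousLinearMap.comp_apply]
    rw [hTP, map_neg, map_neg, hRT w hwmem, hQT₀ w hwmem]
    simp [hw]
  have hfg : ∀ z : N, f (g z) = z := by
    intro z
    show P (g₀ (z : H)) = z
    simp only [hg₀, ContinuousLinearMap.sub_apply, ContinuousLinearMap.coe_id', id_eq,
      ContinuousLinearMap.comp_apply, map_sub]
    rw [show P = N.orthogonalProjectionOnto from rfl]
    rw [Submodule.orthogonalProjectionOnto_mem_subspace_eq_self z,
      Submodule.orthogonalProjectionOnto_apply_of_mem_orthogonal (hQrange _)]
    simp
  refine ⟨LinearEquiv.ofLinear f g ?_ ?_, ?_⟩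
  · ext z
    exact congrArg Subtype.val (hfg z)
  · ext x
    exact hgf x
  · intro x
    show (x : H) - ((f x : N) : H) ∈ Nᗮ
    exact N.sub_starProjection_mem_orthogonal (x : H)
end

section
/- Let E′ and E″ be real vector spaces, let κ′_I, κ′_J, κ′_K be alternating 2-forms on E′ and κ″_I, κ″_J, κ″_K alternating 2-forms on E″, and let f : E′ → E″ be a linear isomorphism with f*κ″_I = κ′_J, f*κ″_J = κ′_I and f*κ″_K = −κ′_K. Set V′ = E′ × ℝ³ with coordinate 1-forms dα′, dθ′, ds′ on the ℝ³ factor (and all forms on E′ pulled back to V′), define V″ and dα″, dθ″, ds″ analogously, and let F : V′ → V″ be the linear map F(y, a, t, σ) = (f(y), t, a, −σ). Then F*(κ″_I ∧ dα″ + κ″_J ∧ dθ″ + κ″_K ∧ ds″ + dα″ ∧ dθ″ ∧ ds″) = κ′_I ∧ dα′ + κ′_J ∧ dθ′ + κ′_K ∧ ds′ + dα′ ∧ dθ′ ∧ ds′ as alternating 3-forms on V′. -/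
open scoped TensorProduct

noncomputable section

/-- The wedge product of two real-valued alternating forms, defined via
`AlternatingMap.domCoprod` (the sum over shuffles with signs), followed by multiplication
`ℝ ⊗ ℝ → ℝ` and the reindexing `Fin m ⊕ Fin n ≃ Fin (m + n)`. -/
def wedge {M : Type*} [AddCommGroup M] [Module ℝ M] {m n : ℕ}
    (ω : M [⋀^Fin m]→ₗ[ℝ] ℝ) (η : M [⋀^Fin n]→ₗ[ℝ] ℝ) :
    M [⋀^Fin (m + n)]→ₗ[ℝ] ℝ :=
  AlternatingMap.domDomCongr finSumFinEquiv
    ((TensorProduct.lid ℝ ℝ).toLinearMap.compAlternatingMap (ω.domCoprod η))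

/-- A linear functional viewed as an alternating 1-form. -/
def oneForm {M : Type*} [AddCommGroup M] [Module ℝ M] (φ : M →ₗ[ℝ] ℝ) :
    M [⋀^Fin 1]→ₗ[ℝ] ℝ :=
  AlternatingMap.ofSubsingleton ℝ M ℝ (0 : Fin 1) φ

/-- The model space `V = E × ℝ³` (with `ℝ³` carrying the coordinates `α, θ, s`). -/
abbrev V (E : Type*) [AddCommGroup E] [Module ℝ E] := E × ℝ × ℝ × ℝ

variable (E : Type*) [AddCommGroup E] [Module ℝ E]

/-- Projection `V E → E`. -/
def projE : V E →ₗ[ℝ] E := LinearMap.fst ℝ E (ℝ × ℝ × ℝ)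

/-- The coordinate 1-form `dα` on `V E`. -/
def dAlpha : V E →ₗ[ℝ] ℝ :=
  (LinearMap.fst ℝ ℝ (ℝ × ℝ)).comp (LinearMap.snd ℝ E (ℝ × ℝ × ℝ))

/-- The coordinate 1-form `dθ` on `V E`. -/
def dTheta : V E →ₗ[ℝ] ℝ :=
  ((LinearMap.fst ℝ ℝ ℝ).comp (LinearMap.snd ℝ ℝ (ℝ × ℝ))).comp
    (LinearMap.snd ℝ E (ℝ × ℝ × ℝ))

/-- The coordinate 1-form `ds` on `V E`. -/
def dS : V E →ₗ[ℝ] ℝ :=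
  ((LinearMap.snd ℝ ℝ ℝ).comp (LinearMap.snd ℝ ℝ (ℝ × ℝ))).comp
    (LinearMap.snd ℝ E (ℝ × ℝ × ℝ))

variable {E}

/-- The asymptotic `G₂`-structure 3-form
`φ = κ_I ∧ dα + κ_J ∧ dθ + κ_K ∧ ds + dα ∧ dθ ∧ ds` on `V E = E × ℝ³`,
where the 2-forms `κ_I, κ_J, κ_K` on `E` are pulled back to `V E` via the projection. -/
def g2Form (κI κJ κK : E [⋀^Fin 2]→ₗ[ℝ] ℝ) : (V E) [⋀^Fin 3]→ₗ[ℝ] ℝ :=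
  (wedge (κI.compLinearMap (projE E)) (oneForm (dAlpha E)) :
      (V E) [⋀^Fin 3]→ₗ[ℝ] ℝ)
    + (wedge (κJ.compLinearMap (projE E)) (oneForm (dTheta E)) :
      (V E) [⋀^Fin 3]→ₗ[ℝ] ℝ)
    + (wedge (κK.compLinearMap (projE E)) (oneForm (dS E)) :
      (V E) [⋀^Fin 3]→ₗ[ℝ] ℝ)
    + (wedge (wedge (oneForm (dAlpha E)) (oneForm (dTheta E))) (oneForm (dS E)) :
      (V E) [⋀^Fin 3]→ₗ[ℝ] ℝ)


section WedgeLemmas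

lemma wedge_compLinearMap {M M₂ : Type*} [AddCommGroup M] [Module ℝ M]
    [AddCommGroup M₂] [Module ℝ M₂] {m n : ℕ}
    (ω : M [⋀^Fin m]→ₗ[ℝ] ℝ) (η : M [⋀^Fin n]→ₗ[ℝ] ℝ) (g : M₂ →ₗ[ℝ] M) :
    (wedge ω η).compLinearMap g = wedge (ω.compLinearMap g) (η.compLinearMap g) := by
  ext v
  simp only [wedge, AlternatingMap.compLinearMap_apply, AlternatingMap.domDomCongr_apply,
    LinearMap.compAlternatingMap_apply, AlternatingMap.domCoprod_apply,
    AlternatingMap.domCoprod_coe, MultilinearMap.sum_apply]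
  congr 1
  refine Finset.sum_congr rfl fun σ _ => ?_
  induction σ using Quotient.inductionOn' with
  | h σ =>
    simp [AlternatingMap.domCoprod.summand, MultilinearMap.domCoprod]

lemma wedge_neg_left {M : Type*} [AddCommGroup M] [Module ℝ M] {m n : ℕ}
    (ω : M [⋀^Fin m]→ₗ[ℝ] ℝ) (η : M [⋀^Fin n]→ₗ[ℝ] ℝ) :
    wedge (-ω) η = -(wedge ω η) := by
  ext v
  simp only [wedge, AlternatingMap.neg_apply, AlternatingMap.domDomCongr_apply,
    LinearMap.compAlternatingMap_apply, AlternatingMap.domCoprod_apply,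
    AlternatingMap.domCoprod_coe, MultilinearMap.sum_apply]
  rw [← map_neg, ← Finset.sum_neg_distrib]
  congr 1
  refine Finset.sum_congr rfl fun σ _ => ?_
  induction σ using Quotient.inductionOn' with
  | h σ =>
    simp [AlternatingMap.domCoprod.summand, MultilinearMap.domCoprod,
      TensorProduct.neg_tmul]

lemma wedge_neg_right {M : Type*} [AddCommGroup M] [Module ℝ M] {m n : ℕ}
    (ω : M [⋀^Fin m]→ₗ[ℝ] ℝ) (η : M [⋀^Fin n]→ₗ[ℝ] ℝ) :
    wedge ω (-η) = -(wedge ω η) := by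
  ext v
  simp only [wedge, AlternatingMap.neg_apply, AlternatingMap.domDomCongr_apply,
    LinearMap.compAlternatingMap_apply, AlternatingMap.domCoprod_apply,
    AlternatingMap.domCoprod_coe, MultilinearMap.sum_apply]
  rw [← map_neg, ← Finset.sum_neg_distrib]
  congr 1
  refine Finset.sum_congr rfl fun σ _ => ?_
  induction σ using Quotient.inductionOn' with
  | h σ =>
    simp [AlternatingMap.domCoprod.summand, MultilinearMap.domCoprod,
      TensorProduct.tmul_neg]

lemma oneForm_neg {M : Type*} [AddCommGroup M] [Module ℝ M] (φ : M →ₗ[ℝ] ℝ) :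
    oneForm (-φ) = -oneForm φ := by
  ext v; simp [oneForm]

lemma oneForm_comp {M M₂ : Type*} [AddCommGroup M] [Module ℝ M]
    [AddCommGroup M₂] [Module ℝ M₂] (φ : M →ₗ[ℝ] ℝ) (g : M₂ →ₗ[ℝ] M) :
    (oneForm φ).compLinearMap g = oneForm (φ ∘ₗ g) := by
  ext v; simp [oneForm]

lemma neg_compLinearMap {M M₂ : Type*} [AddCommGroup M] [Module ℝ M]
    [AddCommGroup M₂] [Module ℝ M₂] {n : ℕ}
    (ω : M [⋀^Fin n]→ₗ[ℝ] ℝ) (g : M₂ →ₗ[ℝ] M) :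
    (-ω).compLinearMap g = -(ω.compLinearMap g) := by
  ext v; simp

lemma mk_bij : Function.Bijective
    (QuotientGroup.mk : Equiv.Perm (Fin 1 ⊕ Fin 1) → Equiv.Perm.ModSumCongr (Fin 1) (Fin 1)) := by
  constructor
  · intro x y h
    have h2 := Quotient.exact' h
    rw [QuotientGroup.leftRel_apply] at h2
    obtain ⟨p, hp⟩ := h2
    have hp1 : p = 1 := Subsingleton.elim _ _
    rw [hp1, map_one] at hp
    have : x⁻¹ * y = 1 := hp.symm
    exact eq_of_inv_mul_eq_one this
  · exact Quotient.mk''_surjective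

set_option synthInstance.maxHeartbeats 1000000 in
lemma wedge_oneForm_apply {M : Type*} [AddCommGroup M] [Module ℝ M]
    (a b : M →ₗ[ℝ] ℝ) (v : Fin 2 → M) :
    wedge (oneForm a) (oneForm b) v = a (v 0) * b (v 1) - a (v 1) * b (v 0) := by
  simp only [wedge, AlternatingMap.domDomCongr_apply, LinearMap.compAlternatingMap_apply,
    AlternatingMap.domCoprod_apply, AlternatingMap.domCoprod_coe, MultilinearMap.sum_apply]
  rw [← Equiv.sum_comp (Equiv.ofBijective _ mk_bij)]
  have huniv : (Finset.univ : Finset (Equiv.Perm (Fin 1 ⊕ Fin 1))) =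
      {1, Equiv.swap (Sum.inl 0) (Sum.inr 0)} := by decide
  rw [huniv, Finset.sum_insert (by decide), Finset.sum_singleton]
  have h0 : finSumFinEquiv (Sum.inl (0 : Fin 1)) = (0 : Fin (1+1)) := by decide
  have h1 : finSumFinEquiv (Sum.inr (0 : Fin 1)) = (1 : Fin (1+1)) := by decide
  simp [AlternatingMap.domCoprod.summand, Quotient.liftOn'_mk'',
    MultilinearMap.domDomCongr_apply, Function.comp,
    MultilinearMap.domCoprod_apply, oneForm, Equiv.Perm.sign_swap,
    Equiv.swap_apply_left, Equiv.swap_apply_right, TensorProduct.lid_tmul,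
    Units.smul_def, h0, h1]
  ring

lemma wedge_oneForm_anticomm {M : Type*} [AddCommGroup M] [Module ℝ M]
    (a b : M →ₗ[ℝ] ℝ) :
    wedge (oneForm a) (oneForm b) = -(wedge (oneForm b) (oneForm a)) := by
  ext v
  rw [AlternatingMap.neg_apply, wedge_oneForm_apply, wedge_oneForm_apply]
  ring

end WedgeLemmas

/-- **The hyper-Kähler matching makes the `G₂`-structures agree on the gluing region.**
Let `f : E′ → E″` be a linear isomorphism with `f*κ″_I = κ′_J`, `f*κ″_J = κ′_I`,
`f*κ″_K = −κ′_K`, and let `F : V′ → V″`, `F(y, a, t, σ) = (f y, t, a, −σ)`.  Then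
`F*(κ″_I ∧ dα″ + κ″_J ∧ dθ″ + κ″_K ∧ ds″ + dα″ ∧ dθ″ ∧ ds″)
   = κ′_I ∧ dα′ + κ′_J ∧ dθ′ + κ′_K ∧ ds′ + dα′ ∧ dθ′ ∧ ds′`. -/
theorem g2Form_pullback_eq
    {E' E'' : Type*} [AddCommGroup E'] [Module ℝ E'] [AddCommGroup E''] [Module ℝ E'']
    (κI' κJ' κK' : E' [⋀^Fin 2]→ₗ[ℝ] ℝ) (κI'' κJ'' κK'' : E'' [⋀^Fin 2]→ₗ[ℝ] ℝ)
    (f : E' ≃ₗ[ℝ] E'')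
    (hI : κI''.compLinearMap (f : E' →ₗ[ℝ] E'') = κJ')
    (hJ : κJ''.compLinearMap (f : E' →ₗ[ℝ] E'') = κI')
    (hK : κK''.compLinearMap (f : E' →ₗ[ℝ] E'') = -κK')
    (F : V E' →ₗ[ℝ] V E'')
    (hF : ∀ v : V E', F v = (f v.1, v.2.2.1, v.2.1, -v.2.2.2)) :
    (g2Form κI'' κJ'' κK'').compLinearMap F = g2Form κI' κJ' κK' := by
  -- the structural linear-map identities
  have hproj : (projE E'') ∘ₗ F = (f : E' →ₗ[ℝ] E'') ∘ₗ (projE E') := by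
    ext v <;> simp [projE, hF]
  have hda : (dAlpha E'') ∘ₗ F = dTheta E' := by
    ext v <;> simp [dAlpha, dTheta, hF]
  have hdt : (dTheta E'') ∘ₗ F = dAlpha E' := by
    ext v <;> simp [dAlpha, dTheta, hF]
  have hds : (dS E'') ∘ₗ F = -(dS E') := by
    ext v <;> simp [dS, hF]
  have hcomp : ∀ κ : E'' [⋀^Fin 2]→ₗ[ℝ] ℝ,
      (κ.compLinearMap (projE E'')).compLinearMap F =
        (κ.compLinearMap (f : E' →ₗ[ℝ] E'')).compLinearMap (projE E') := by
    intro κ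
    rw [AlternatingMap.compLinearMap_assoc, hproj, ← AlternatingMap.compLinearMap_assoc]
  unfold g2Form
  rw [AlternatingMap.add_compLinearMap, AlternatingMap.add_compLinearMap,
    AlternatingMap.add_compLinearMap]
  rw [wedge_compLinearMap, wedge_compLinearMap, wedge_compLinearMap, wedge_compLinearMap,
    wedge_compLinearMap]
  rw [hcomp, hcomp, hcomp, hI, hJ, hK]
  rw [oneForm_comp, oneForm_comp, oneForm_comp, hda, hdt, hds]
  rw [oneForm_neg, neg_compLinearMap, wedge_neg_left, wedge_neg_right, neg_neg]
  rw [wedge_oneForm_anticomm (dTheta E') (dAlpha E'), wedge_neg_left, wedge_neg_right, neg_neg]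
  abel
end
end
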